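/- In the same Markov chain model, every invariant (stationary) probability measure μ_ε is supported in [−ε, ε], hence every weak-* accumulation point of (μ_ε)_{ε→0} is the Dirac mass δ₀ at 0. -/

import Mathlib

open MeasureTheory Metric Filter BoundedContinuousFunction

/-- One step of the chain killed upon entering the ball `(−ε, ε)`:
evolve by the kernel `κ` and restrict to the complement of the ball. -/
noncomputable def killedStep (κ : AddCircle (1 : ℝ) → Measure (AddCircle (1 : ℝ)))
    (ε : ℝ) (ν : Measure (AddCircle (1 : ℝ))) : Measure (AddCircle (1 : ℝ)) :=
  (ν.bind κ).restrict (ball (0 : AddCircle (1 : ℝ)) ε)ᶜ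

section aux

variable {α : Type*} [MeasurableSpace α]

/-- measurability of `c ↦ volume (s ∩ closedBall c ε)` on the circle. -/
lemma meas_vol_inter_closedBall {s : Set (AddCircle (1:ℝ))} (hs : MeasurableSet s) (ε : ℝ) :
    Measurable fun c : AddCircle (1:ℝ) => volume (s ∩ closedBall c ε) := by
  have hS : MeasurableSet {p : AddCircle (1:ℝ) × AddCircle (1:ℝ) | p.2 ∈ s ∧ dist p.2 p.1 ≤ ε} := by
    refine (measurable_snd hs).inter ?_
    exact measurableSet_le (continuous_dist.comp (continuous_snd.prodMk continuous_fst)).measurable measurable_const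
  have h := measurable_measure_prodMk_left (ν := (volume : Measure (AddCircle (1:ℝ)))) hS
  have heq : (fun c : AddCircle (1:ℝ) => volume (s ∩ closedBall c ε)) =
      fun c => volume (Prod.mk c ⁻¹' {p : AddCircle (1:ℝ) × AddCircle (1:ℝ) | p.2 ∈ s ∧ dist p.2 p.1 ≤ ε}) := by
    funext c
    have hset : s ∩ closedBall c ε =
        Prod.mk c ⁻¹' {p : AddCircle (1:ℝ) × AddCircle (1:ℝ) | p.2 ∈ s ∧ dist p.2 p.1 ≤ ε} := by
      ext y
      simp only [Set.mem_inter_iff, mem_closedBall, Set.mem_preimage, Set.mem_setOf_eq]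
    rw [hset]
  rw [heq]
  exact h

lemma meas_kernel {κ : AddCircle (1:ℝ) → Measure (AddCircle (1:ℝ))}
    {φ : AddCircle (1:ℝ) → AddCircle (1:ℝ)} {ε : ℝ} (hφ : Continuous φ)
    (hκ : ∀ z, κ z = (volume (closedBall (φ z) ε))⁻¹ •
      (volume : Measure (AddCircle (1:ℝ))).restrict (closedBall (φ z) ε)) :
    Measurable κ := by
  apply Measure.measurable_of_measurable_coe
  intro s hs
  have : (fun z => κ z s) =
      fun z => (ENNReal.ofReal (min 1 (2*ε)))⁻¹ * volume (s ∩ closedBall (φ z) ε) := by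
    funext z
    rw [hκ z, Measure.smul_apply, smul_eq_mul, Measure.restrict_apply hs,
      AddCircle.volume_closedBall]
  rw [this]
  exact ((meas_vol_inter_closedBall hs ε).comp hφ.measurable).const_mul _

end aux

theorem aux_part1 (ε₀ : ℝ) (hε₀ : 0 < ε₀) (hε₀small : ε₀ < 1 / 8)
    (φ : ℝ → AddCircle (1 : ℝ) → AddCircle (1 : ℝ))
    (hφcont : ∀ ε ∈ Set.Ioo 0 ε₀, Continuous (φ ε))
    (hφ0 : ∀ ε ∈ Set.Ioo 0 ε₀, ∀ z ∈ ball (0 : AddCircle (1 : ℝ)) ε, φ ε z = 0)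
    (κ : ℝ → AddCircle (1 : ℝ) → Measure (AddCircle (1 : ℝ)))
    (hκ : ∀ ε ∈ Set.Ioo 0 ε₀, ∀ z, κ ε z = (volume (closedBall (φ ε z) ε))⁻¹ •
      (volume : Measure (AddCircle (1 : ℝ))).restrict (closedBall (φ ε z) ε))
    (hEnter : ∀ ε ∈ Set.Ioo 0 ε₀, ∀ z : AddCircle (1 : ℝ),
      Tendsto (fun n => (killedStep (κ ε) ε)^[n] (Measure.dirac z) Set.univ) atTop (nhds 0))
    (μ : ℝ → Measure (AddCircle (1 : ℝ)))
    (hμprob : ∀ ε ∈ Set.Ioo 0 ε₀, IsProbabilityMeasure (μ ε))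
    (hμstat : ∀ ε ∈ Set.Ioo 0 ε₀, ∀ A : Set (AddCircle (1 : ℝ)), MeasurableSet A →
      μ ε A = ∫⁻ z, κ ε z A ∂(μ ε)) :
    ∀ ε ∈ Set.Ioo 0 ε₀, μ ε (closedBall (0 : AddCircle (1 : ℝ)) ε)ᶜ = 0 := by
  intro ε hε
  have hμP := hμprob ε hε
  set B : Set (AddCircle (1:ℝ)) := ball (0 : AddCircle (1:ℝ)) ε with hBdef
  have hB : MeasurableSet B := measurableSet_ball
  have hBc : MeasurableSet Bᶜ := hB.compl
  set K := killedStep (κ ε) ε with hKdef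
  have hκm : Measurable (κ ε) := meas_kernel (hφcont ε hε) (hκ ε hε)
  -- the killed kernel
  set κ' : AddCircle (1:ℝ) → Measure (AddCircle (1:ℝ)) := fun z => (κ ε z).restrict Bᶜ with hκ'def
  have hκ'm : Measurable κ' := by
    apply Measure.measurable_of_measurable_coe
    intro s hs
    have : (fun z => κ' z s) = fun z => κ ε z (s ∩ Bᶜ) := by
      funext z; simp [hκ'def, Measure.restrict_apply hs]
    rw [this]
    exact (Measure.measurable_coe (hs.inter hBc)).comp hκm
  have hKeq : ∀ ν : Measure (AddCircle (1:ℝ)), K ν = ν.bind κ' := by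
    intro ν
    ext s hs
    rw [hKdef, killedStep, Measure.restrict_apply hs,
      Measure.bind_apply (hs.inter hBc) hκm.aemeasurable, Measure.bind_apply hs hκ'm.aemeasurable]
    congr 1
    funext z
    rw [hκ'def, Measure.restrict_apply hs]
  -- the kernel has mass ≤ 1
  have hκ1 : ∀ z, κ ε z Set.univ ≤ 1 := by
    intro z
    rw [hκ ε hε z, Measure.smul_apply, smul_eq_mul, Measure.restrict_apply MeasurableSet.univ,
      Set.univ_inter]
    set a := volume (closedBall (φ ε z) ε)
    rcases eq_or_ne a 0 with h | h
    · simp [h]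
    rcases eq_or_ne a ⊤ with h' | h'
    · simp [h']
    · rw [ENNReal.inv_mul_cancel h h']
  have hκ'1 : ∀ z, κ' z Set.univ ≤ 1 := fun z => le_trans (measure_mono (Set.subset_univ _)) (by
    rw [hκ'def]; exact le_trans (le_of_eq (by rw [Measure.restrict_apply_univ])) (le_trans (measure_mono (Set.subset_univ _)) (hκ1 z)))
  -- mass decreases
  have hKmass : ∀ ν : Measure (AddCircle (1:ℝ)), K ν Set.univ ≤ ν Set.univ := by
    intro ν
    rw [hKeq ν, Measure.bind_apply MeasurableSet.univ hκ'm.aemeasurable]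
    calc ∫⁻ z, κ' z Set.univ ∂ν ≤ ∫⁻ _, 1 ∂ν := lintegral_mono fun z => hκ'1 z
    _ = ν Set.univ := lintegral_one
  -- representation of iterated mass
  have hKdirac : ∀ z, K (Measure.dirac z) = κ' z := by
    intro z; rw [hKeq]; exact Measure.dirac_bind hκ'm z
  have main : ∀ n : ℕ, Measurable (fun z => K^[n] (Measure.dirac z) Set.univ) ∧
      ∀ ν : Measure (AddCircle (1:ℝ)), K^[n] ν Set.univ =
        ∫⁻ z, K^[n] (Measure.dirac z) Set.univ ∂ν := by
    intro n
    induction n with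
    | zero =>
      have h0 : (fun z : AddCircle (1:ℝ) => K^[0] (Measure.dirac z) Set.univ) = fun _ => 1 := by
        funext z; simp
      refine ⟨by rw [h0]; exact measurable_const, fun ν => by rw [h0]; simp⟩
    | succ n ih =>
      have hg' : ∀ z, K^[n+1] (Measure.dirac z) Set.univ =
          ∫⁻ w, K^[n] (Measure.dirac w) Set.univ ∂(κ' z) := by
        intro z
        rw [Function.iterate_succ_apply, hKdirac z]
        exact ih.2 (κ' z)
      constructor
      · have heq : (fun z : AddCircle (1:ℝ) => K^[n+1] (Measure.dirac z) Set.univ) =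
            fun z => ∫⁻ w, K^[n] (Measure.dirac w) Set.univ ∂(κ' z) := funext hg'
        rw [heq]
        exact (Measure.measurable_lintegral ih.1).comp hκ'm
      · intro ν
        rw [Function.iterate_succ_apply, hKeq ν, ih.2 (ν.bind κ'),
          Measure.lintegral_bind hκ'm.aemeasurable ih.1.aemeasurable]
        exact lintegral_congr fun z => (hg' z).symm
  -- masses bounded by 1
  have hgle : ∀ n z, K^[n] (Measure.dirac z) Set.univ ≤ 1 := by
    intro n z
    have hmono : ∀ m (ν : Measure (AddCircle (1:ℝ))), K^[m] ν Set.univ ≤ ν Set.univ := by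
      intro m
      induction m with
      | zero => intro ν; exact le_rfl
      | succ m ih => intro ν
                     rw [Function.iterate_succ_apply]
                     exact le_trans (ih _) (hKmass ν)
    exact le_trans (hmono n (Measure.dirac z)) (by simp)
  -- monotonicity of K
  have hKmono : ∀ ν ν' : Measure (AddCircle (1:ℝ)), ν ≤ ν' → K ν ≤ K ν' := by
    intro ν ν' h
    rw [Measure.le_iff]
    intro s hs
    rw [hKeq ν, hKeq ν', Measure.bind_apply hs hκ'm.aemeasurable, Measure.bind_apply hs hκ'm.aemeasurable]
    exact lintegral_mono' h le_rfl
  -- stationarity: μ.bind κ = μ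
  have hbind : (μ ε).bind (κ ε) = μ ε := by
    ext s hs
    rw [Measure.bind_apply hs hκm.aemeasurable]
    exact (hμstat ε hε s hs).symm
  have hKμ : K (μ ε) = (μ ε).restrict Bᶜ := by
    rw [hKdef, killedStep, hbind]
  -- killed step annihilates the mass inside the ball
  have hKin : K ((μ ε).restrict B) = 0 := by
    have h0 : ((μ ε).restrict B).bind (κ ε) Bᶜ = 0 := by
      rw [Measure.bind_apply hBc hκm.aemeasurable]
      have hz : ∀ z ∈ B, κ ε z Bᶜ = 0 := by
        intro z hzB
        rw [hκ ε hε z, hφ0 ε hε z hzB, Measure.smul_apply, smul_eq_mul,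
          Measure.restrict_apply hBc]
        have hdiff : Bᶜ ∩ closedBall (0 : AddCircle (1:ℝ)) ε = closedBall (0:AddCircle (1:ℝ)) ε \ B :=
          (Set.diff_eq_compl_inter).symm
        rw [hdiff]
        have := (ae_le_set.mp (AddCircle.closedBall_ae_eq_ball
          (x := (0:AddCircle (1:ℝ))) (ε := ε)).le)
        rw [hBdef, this, mul_zero]
      refine le_antisymm ?_ zero_le
      calc ∫⁻ z, κ ε z Bᶜ ∂((μ ε).restrict B) ≤ ∫⁻ _, 0 ∂((μ ε).restrict B) := by
            refine lintegral_mono_ae ?_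
            exact (ae_restrict_of_forall_mem hB fun z hzB => le_of_eq (hz z hzB))
        _ = 0 := lintegral_zero
    have : K ((μ ε).restrict B) Set.univ = 0 := by
      rw [hKdef, killedStep, Measure.restrict_apply_univ]
      exact h0
    exact Measure.measure_univ_eq_zero.mp this
  -- additivity of K
  have hKadd : ∀ ν₁ ν₂ : Measure (AddCircle (1:ℝ)), K (ν₁ + ν₂) = K ν₁ + K ν₂ := by
    intro ν₁ ν₂
    ext s hs
    rw [hKeq, hKeq, hKeq, Measure.add_apply, Measure.bind_apply hs hκ'm.aemeasurable,
      Measure.bind_apply hs hκ'm.aemeasurable, Measure.bind_apply hs hκ'm.aemeasurable, lintegral_add_measure]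
  -- fixed point
  have hfix : K ((μ ε).restrict Bᶜ) = (μ ε).restrict Bᶜ := by
    have hsplit : (μ ε).restrict B + (μ ε).restrict Bᶜ = μ ε :=
      Measure.restrict_add_restrict_compl hB
    have := hKadd ((μ ε).restrict B) ((μ ε).restrict Bᶜ)
    rw [hsplit, hKμ, hKin, zero_add] at this
    exact this.symm
  -- main inequality  μ Bᶜ ≤ ∫ g n dμ
  have h2 : ∀ n : ℕ, K^[n] ((μ ε).restrict Bᶜ) ≤ K^[n] (μ ε) := by
    intro n
    induction n with
    | zero => exact Measure.restrict_le_self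
    | succ n ih => rw [Function.iterate_succ_apply', Function.iterate_succ_apply']
                   exact hKmono _ _ ih
  have hineq : ∀ n : ℕ, μ ε Bᶜ ≤ ∫⁻ z, K^[n] (Measure.dirac z) Set.univ ∂(μ ε) := by
    intro n
    have h1 : K^[n] ((μ ε).restrict Bᶜ) = (μ ε).restrict Bᶜ :=
      Function.iterate_fixed hfix n
    calc μ ε Bᶜ = K^[n] ((μ ε).restrict Bᶜ) Set.univ := by
          rw [h1, Measure.restrict_apply_univ]
      _ ≤ K^[n] (μ ε) Set.univ := h2 n Set.univ
      _ = ∫⁻ z, K^[n] (Measure.dirac z) Set.univ ∂(μ ε) := (main n).2 (μ ε)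
  -- tendsto 0
  have htend : Tendsto (fun n => ∫⁻ z, K^[n] (Measure.dirac z) Set.univ ∂(μ ε)) atTop (nhds 0) := by
    have := tendsto_lintegral_of_dominated_convergence (μ := μ ε) (bound := fun _ => 1)
      (fun n => (main n).1) (fun n => Eventually.of_forall fun z => hgle n z)
      (by simp) (Eventually.of_forall fun z => hEnter ε hε z)
    simpa using this
  have hB0 : μ ε Bᶜ = 0 := by
    have := ge_of_tendsto' htend hineq
    exact le_antisymm this zero_le
  have hsub : (closedBall (0 : AddCircle (1:ℝ)) ε)ᶜ ⊆ Bᶜ :=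
    Set.compl_subset_compl.mpr ball_subset_closedBall
  exact le_antisymm (le_trans (measure_mono hsub) (le_of_eq hB0)) zero_le

theorem aux_part2 (e : ℕ → ℝ) (μ : ℝ → Measure (AddCircle (1:ℝ)))
        (hμprob : ∀ n, IsProbabilityMeasure (μ (e n)))
    (hsupp : ∀ n, μ (e n) (closedBall (0 : AddCircle (1:ℝ)) (e n))ᶜ = 0)
    (hetend : Tendsto e atTop (nhds 0))
    (ν : Measure (AddCircle (1:ℝ))) (hν : IsProbabilityMeasure ν)
    (hconv : ∀ f : AddCircle (1 : ℝ) →ᵇ ℝ,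
      Tendsto (fun n => ∫ x, f x ∂(μ (e n))) atTop (nhds (∫ x, f x ∂ν))) :
    ν = Measure.dirac 0 := by
  have hd : IsProbabilityMeasure (Measure.dirac (0 : AddCircle (1:ℝ))) :=
    Measure.dirac.isProbabilityMeasure
  set Pn : ℕ → ProbabilityMeasure (AddCircle (1:ℝ)) := fun n => ⟨μ (e n), hμprob n⟩ with hPn
  set Pν : ProbabilityMeasure (AddCircle (1:ℝ)) := ⟨ν, hν⟩
  set Pd : ProbabilityMeasure (AddCircle (1:ℝ)) := ⟨Measure.dirac 0, hd⟩
  have h1 : Tendsto Pn atTop (nhds Pν) :=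
    ProbabilityMeasure.tendsto_iff_forall_integral_tendsto.mpr fun f => hconv f
  have h2 : Tendsto Pn atTop (nhds Pd) := by
    refine ProbabilityMeasure.tendsto_iff_forall_integral_tendsto.mpr fun f => ?_
    have hint : (∫ x, f x ∂(Measure.dirac (0 : AddCircle (1:ℝ)))) = f 0 :=
      integral_dirac _ _
    show Tendsto (fun n => ∫ x, f x ∂(μ (e n))) atTop (nhds (∫ x, f x ∂(Measure.dirac (0:AddCircle (1:ℝ)))))
    rw [hint]
    rw [Metric.tendsto_atTop]
    intro δ hδ
    obtain ⟨r, hr, hball⟩ := Metric.continuousAt_iff.mp (f.continuous.continuousAt (x := 0))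
      (δ/2) (half_pos hδ)
    have hev : ∀ᶠ n in atTop, e n < r := hetend.eventually_lt_const hr
    obtain ⟨N, hN⟩ := eventually_atTop.mp hev
    refine ⟨N, fun n hn => ?_⟩
    have hae : ∀ᵐ x ∂(μ (e n)), ‖f x - f 0‖ ≤ δ/2 := by
      have hmem : ∀ᵐ x ∂(μ (e n)), x ∈ closedBall (0 : AddCircle (1:ℝ)) (e n) :=
        mem_ae_iff.mpr (hsupp n)
      filter_upwards [hmem] with x hx
      have hdx : dist x (0 : AddCircle (1:ℝ)) < r := lt_of_le_of_lt (mem_closedBall.mp hx) (hN n hn)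
      have := hball hdx
      rw [Real.dist_eq] at this
      rw [Real.norm_eq_abs]
      exact le_of_lt this
    have hint1 : Integrable (fun x => f x) (μ (e n)) := f.integrable _
    have hint2 : Integrable (fun _ : AddCircle (1:ℝ) => f 0) (μ (e n)) := integrable_const _
    have hsub : (∫ x, (f x - f 0) ∂(μ (e n))) = (∫ x, f x ∂(μ (e n))) - f 0 := by
      rw [integral_sub hint1 hint2, integral_const]
      have : (μ (e n)) Set.univ = 1 := (hμprob n).measure_univ
      simp
    have hbd : ‖∫ x, (f x - f 0) ∂(μ (e n))‖ ≤ (δ/2) * ((μ (e n)) Set.univ).toReal :=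
      norm_integral_le_of_norm_le_const hae
    rw [hsub] at hbd
    have : ((μ (e n)) Set.univ).toReal = 1 := by
      rw [(hμprob n).measure_univ]; simp
    rw [this, mul_one] at hbd
    rw [Real.dist_eq]
    calc |(∫ x, f x ∂(μ (e n))) - f 0| ≤ δ/2 := by rwa [Real.norm_eq_abs] at hbd
      _ < δ := half_lt_self hδ
  have : Pν = Pd := tendsto_nhds_unique h1 h2
  have := congrArg (fun p : ProbabilityMeasure (AddCircle (1:ℝ)) => (p : Measure (AddCircle (1:ℝ)))) this
  exact this


/-- **Stochastic instability of the doubling map.**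
For each small `ε > 0` let `φ_ε` be continuous on `S¹ = ℝ/ℤ`, with `φ_ε ≡ 0` on
`(−ε, ε)` and `φ_ε = T₀` (the doubling map) outside `(−2ε, 2ε)`, and let the
transition kernel `κ_ε(·|z)` be the normalized Lebesgue measure on
`[φ_ε(z) − ε, φ_ε(z) + ε]`.  Assume that from every point the chain almost surely
eventually enters `(−ε, ε)` (the killed chain dies out).  Then every stationary
probability measure `μ_ε` is supported in `[−ε, ε]`, and every weak-* accumulation
point of `(μ_ε)` as `ε → 0` is the Dirac mass `δ₀` at `0`. -/
theorem stationary_measures_concentrate_at_zero (ε₀ : ℝ) (hε₀ : 0 < ε₀) (hε₀small : ε₀ < 1 / 8)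
    (φ : ℝ → AddCircle (1 : ℝ) → AddCircle (1 : ℝ))
    (hφcont : ∀ ε ∈ Set.Ioo 0 ε₀, Continuous (φ ε))
    (hφ0 : ∀ ε ∈ Set.Ioo 0 ε₀, ∀ z ∈ ball (0 : AddCircle (1 : ℝ)) ε, φ ε z = 0)
    (hφout : ∀ ε ∈ Set.Ioo 0 ε₀, ∀ z ∉ ball (0 : AddCircle (1 : ℝ)) (2 * ε),
      φ ε z = (2 : ℕ) • z)
    (κ : ℝ → AddCircle (1 : ℝ) → Measure (AddCircle (1 : ℝ)))
    (hκ : ∀ ε ∈ Set.Ioo 0 ε₀, ∀ z, κ ε z = (volume (closedBall (φ ε z) ε))⁻¹ •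
      (volume : Measure (AddCircle (1 : ℝ))).restrict (closedBall (φ ε z) ε))
    (hEnter : ∀ ε ∈ Set.Ioo 0 ε₀, ∀ z : AddCircle (1 : ℝ),
      Tendsto (fun n => (killedStep (κ ε) ε)^[n] (Measure.dirac z) Set.univ) atTop (nhds 0))
    (μ : ℝ → Measure (AddCircle (1 : ℝ)))
    (hμprob : ∀ ε ∈ Set.Ioo 0 ε₀, IsProbabilityMeasure (μ ε))
    (hμstat : ∀ ε ∈ Set.Ioo 0 ε₀, ∀ A : Set (AddCircle (1 : ℝ)), MeasurableSet A →
      μ ε A = ∫⁻ z, κ ε z A ∂(μ ε)) :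
    (∀ ε ∈ Set.Ioo 0 ε₀, μ ε (closedBall (0 : AddCircle (1 : ℝ)) ε)ᶜ = 0) ∧
      ∀ (e : ℕ → ℝ), (∀ n, e n ∈ Set.Ioo 0 ε₀) → Tendsto e atTop (nhds 0) →
        ∀ ν : Measure (AddCircle (1 : ℝ)), IsProbabilityMeasure ν →
          (∀ f : AddCircle (1 : ℝ) →ᵇ ℝ,
            Tendsto (fun n => ∫ x, f x ∂(μ (e n))) atTop (nhds (∫ x, f x ∂ν))) →
          ν = Measure.dirac 0 := by
  
  constructor
  · exact aux_part1 ε₀ hε₀ hε₀small φ hφcont hφ0 κ hκ hEnter μ hμprob hμstat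
  · intro e he hetend ν hν hconv
    exact aux_part2 e μ (fun n => hμprob (e n) (he n))
      (fun n => aux_part1 ε₀ hε₀ hε₀small φ hφcont hφ0 κ hκ hEnter μ hμprob hμstat (e n) (he n))
      hetend ν hν hconv
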